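/- For every h₁, h₂ > 0 and every (x, y) ∈ ℝ², the tensor-product modified B-spline kernel forms a partition of unity on the two-dimensional lattice: ∑_{(j₁, j₂) ∈ ℤ²} W₄(x − j₁h₁, h₁) · W₄(y − j₂h₂, h₂) = 1. -/

import Mathlib

/-- Monaghan's modified cubic B-spline interpolation kernel `W₄`. -/
noncomputable def W4 (x h : ℝ) : ℝ :=
  let s := |x| / h
  if s ≤ 1 then 1 - 5/2 * s^2 + 3/2 * s^3
  else if s ≤ 2 then 1/2 * (2 - s)^2 * (1 - s)
  else 0

lemma W4_lo (x h : ℝ) (h1 : |x| / h ≤ 1) :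
    W4 x h = 1 - 5/2 * (|x|/h)^2 + 3/2 * (|x|/h)^3 := by
  simp [W4, h1]

lemma W4_mid (x h : ℝ) (h1 : 1 ≤ |x| / h) (h2 : |x| / h ≤ 2) :
    W4 x h = 1/2 * (2 - |x|/h)^2 * (1 - |x|/h) := by
  simp only [W4]
  split_ifs with hs
  · have : |x| / h = 1 := le_antisymm hs h1
    rw [this]; ring
  · rfl

lemma W4_hi (x h : ℝ) (h2 : 2 ≤ |x| / h) : W4 x h = 0 := by
  simp only [W4]
  split_ifs with hs hs2
  · linarith
  · have : |x| / h = 2 := le_antisymm hs2 h2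
    rw [this]; ring
  · rfl

lemma abs_sub_div (x h : ℝ) (hh : 0 < h) (j : ℤ) :
    |x - j * h| / h = |x / h - j| := by
  rw [show |x - ↑j * h| / h = |(x - ↑j * h) / h| by rw [abs_div, abs_of_pos hh]]
  congr 1
  field_simp

lemma W4_vanish (x h : ℝ) (hh : 0 < h) (j : ℤ)
    (hj : j < ⌊x/h⌋ - 1 ∨ ⌊x/h⌋ + 2 < j) : W4 (x - j * h) h = 0 := by
  apply W4_hi
  rw [abs_sub_div x h hh j]
  have h1 : (⌊x/h⌋ : ℝ) ≤ x / h := Int.floor_le _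
  have h2 : x / h < ⌊x/h⌋ + 1 := Int.lt_floor_add_one _
  rcases hj with hj | hj
  · have : (j : ℝ) ≤ (⌊x/h⌋ : ℝ) - 2 := by exact_mod_cast by omega
    rw [abs_of_nonneg (by linarith)]; linarith
  · have : (⌊x/h⌋ : ℝ) + 3 ≤ (j : ℝ) := by exact_mod_cast by omega
    rw [abs_of_nonpos (by linarith)]; linarith

lemma W4_foursum_aux (x h : ℝ) (hh : 0 < h) (n : ℤ)
    (h0 : (n : ℝ) ≤ x / h) (h1 : x / h < n + 1) :
    W4 (x - (↑(n - 1) : ℝ) * h) h + W4 (x - (n : ℝ) * h) h +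
      W4 (x - (↑(n + 1) : ℝ) * h) h + W4 (x - (↑(n + 2) : ℝ) * h) h = 1 := by
  have e1 : |x - (↑(n - 1) : ℝ) * h| / h = (x / h - n) + 1 := by
    rw [abs_sub_div x h hh (n - 1)]
    push_cast
    rw [abs_of_nonneg (by linarith)]
    ring
  have e2 : |x - (n : ℝ) * h| / h = x / h - n := by
    rw [abs_sub_div x h hh n, abs_of_nonneg (by linarith)]
  have e3 : |x - (↑(n + 1) : ℝ) * h| / h = 1 - (x / h - n) := by
    rw [abs_sub_div x h hh (n + 1)]
    push_cast
    rw [abs_of_nonpos (by linarith)]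
    ring
  have e4 : |x - (↑(n + 2) : ℝ) * h| / h = 2 - (x / h - n) := by
    rw [abs_sub_div x h hh (n + 2)]
    push_cast
    rw [abs_of_nonpos (by linarith)]
    ring
  rw [W4_mid _ _ (by rw [e1]; linarith) (by rw [e1]; linarith),
      W4_lo _ _ (by rw [e2]; linarith),
      W4_lo _ _ (by rw [e3]; linarith),
      W4_mid _ _ (by rw [e4]; linarith) (by rw [e4]; linarith),
      e1, e2, e3, e4]
  ring

lemma W4_finset_sum (x h : ℝ) (hh : 0 < h) :
    ∑ j ∈ ({⌊x/h⌋ - 1, ⌊x/h⌋, ⌊x/h⌋ + 1, ⌊x/h⌋ + 2} : Finset ℤ),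
      W4 (x - j * h) h = 1 := by
  rw [Finset.sum_insert (by simp only [Finset.mem_insert, Finset.mem_singleton]; omega),
      Finset.sum_insert (by simp only [Finset.mem_insert, Finset.mem_singleton]; omega),
      Finset.sum_insert (by simp only [Finset.mem_singleton]; omega),
      Finset.sum_singleton]
  have := W4_foursum_aux x h hh ⌊x/h⌋ (Int.floor_le _) (Int.lt_floor_add_one _)
  linarith

/-- The tensor-product modified B-spline kernel forms a partition of unity on the
two-dimensional lattice. -/
theorem W4_tensor_partition_of_unity (h₁ h₂ : ℝ) (hh₁ : 0 < h₁) (hh₂ : 0 < h₂)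
    (x y : ℝ) :
    ∑' j : ℤ × ℤ, W4 (x - j.1 * h₁) h₁ * W4 (y - j.2 * h₂) h₂ = 1 := by
  set s₁ : Finset ℤ := {⌊x/h₁⌋ - 1, ⌊x/h₁⌋, ⌊x/h₁⌋ + 1, ⌊x/h₁⌋ + 2} with hs₁
  set s₂ : Finset ℤ := {⌊y/h₂⌋ - 1, ⌊y/h₂⌋, ⌊y/h₂⌋ + 1, ⌊y/h₂⌋ + 2} with hs₂
  rw [tsum_eq_sum (s := s₁ ×ˢ s₂) ?_]
  · rw [Finset.sum_product]
    dsimp only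
    rw [← Finset.sum_mul_sum]
    rw [show (∑ j ∈ s₁, W4 (x - j * h₁) h₁) = 1 from W4_finset_sum x h₁ hh₁,
        show (∑ j ∈ s₂, W4 (y - j * h₂) h₂) = 1 from W4_finset_sum y h₂ hh₂]
    ring
  · intro p hp
    rw [Finset.mem_product] at hp
    push_neg at hp
    by_cases hp1 : p.1 ∈ s₁
    · have hp2 := hp hp1
      have : W4 (y - p.2 * h₂) h₂ = 0 := by
        apply W4_vanish y h₂ hh₂
        simp only [hs₂, Finset.mem_insert, Finset.mem_singleton] at hp2
        omega
      rw [this, mul_zero]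
    · have : W4 (x - p.1 * h₁) h₁ = 0 := by
        apply W4_vanish x h₁ hh₁
        simp only [hs₁, Finset.mem_insert, Finset.mem_singleton] at hp1
        omega
      rw [this, zero_mul]
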